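/- If the discrete divergence coefficients satisfy first-order consistency Σ_{J∈H_I} (X_J − X_I) γ_{IJ}ᵀ = I (the d×d identity), then for any affine stress field P(X) = P₀ + L(X − X_I) with L a linear matrix-valued map, the base nonlocal divergence Σ_{J∈H_I} (P(X_J) − P(X_I)) γ_{IJ} equals the exact divergence (∇·P)(X_I). -/
import Mathlib


open Matrix Finset

/-- If the discrete coefficients satisfy first-order consistency
`∑_{J∈H_I} (X_J − X_I) γ_{IJ}ᵀ = I`, then for any affine stress field
`P(X) = P₀ + L(X − X_I)` (with `L` a linear matrix-valued map), the base
nonlocal divergence `∑_{J∈H_I} (P(X_J) − P(X_I)) γ_{IJ}` equals the exact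
divergence `(∇·P)(X_I)`, whose `i`-th component is `∑_j (L e_j)_{ij}`. -/
theorem nonlocal_divergence_exact_on_affine {ι : Type*} (d : ℕ)
    (H : Finset ι) (X : ι → (Fin d → ℝ)) (γ : ι → (Fin d → ℝ)) (I : ι)
    (hcons : ∑ J ∈ H, vecMulVec (X J - X I) (γ J) = (1 : Matrix (Fin d) (Fin d) ℝ))
    (P₀ : Matrix (Fin d) (Fin d) ℝ)
    (L : (Fin d → ℝ) →ₗ[ℝ] Matrix (Fin d) (Fin d) ℝ)
    (P : (Fin d → ℝ) → Matrix (Fin d) (Fin d) ℝ)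
    (hP : ∀ x, P x = P₀ + L (x - X I)) :
    ∑ J ∈ H, (P (X J) - P (X I)).mulVec (γ J)
      = fun i => ∑ j, L (Pi.single j 1) i j := by
  have hdiff : ∀ J, P (X J) - P (X I) = L (X J - X I) := by
    intro J; simp [hP]
  have hL : ∀ v : Fin d → ℝ, L v = ∑ j, v j • L (Pi.single j 1) := by
    intro v
    have hsingle : ∀ x : Fin d, (fun j => if x = j then (1:ℝ) else 0) = Pi.single x 1 := by
      intro x; funext j; simp [Pi.single_apply, eq_comm]
    conv_lhs => rw [pi_eq_sum_univ v, map_sum]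
    simp [hsingle]
  have hc : ∀ j k, ∑ J ∈ H, (X J - X I) j * γ J k
      = if j = k then (1:ℝ) else 0 := by
    intro j k
    have := congrFun (congrFun hcons j) k
    simpa [vecMulVec, Matrix.sum_apply, Matrix.one_apply] using this
  funext i
  have key : ∀ J, (P (X J) - P (X I)).mulVec (γ J) i
      = ∑ k, (∑ j, (X J - X I) j * L (Pi.single j 1) i k) * γ J k := by
    intro J
    rw [hdiff, hL (X J - X I)]
    simp [mulVec, dotProduct, Matrix.sum_apply]
  rw [Finset.sum_apply]
  calc ∑ J ∈ H, (P (X J) - P (X I)).mulVec (γ J) i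
      = ∑ J ∈ H, ∑ k, (∑ j, (X J - X I) j * L (Pi.single j 1) i k) * γ J k :=
        Finset.sum_congr rfl fun J _ => key J
    _ = ∑ k, ∑ j, L (Pi.single j 1) i k * (if j = k then (1:ℝ) else 0) := by
        simp only [Finset.sum_mul]
        rw [Finset.sum_comm]
        refine Finset.sum_congr rfl fun k _ => ?_
        rw [Finset.sum_comm]
        refine Finset.sum_congr rfl fun j _ => ?_
        rw [← hc j k, Finset.mul_sum]
        exact Finset.sum_congr rfl fun J _ => by ring
    _ = ∑ j, L (Pi.single j 1) i j := by simp
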